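/- Let (Ω, ℱ, P) be a probability space and U a finite set of size N ≥ 1 partitioned into disjoint nonempty folds U_1, …, U_K of sizes N_1, …, N_K. Let (I_i)_{i∈U} be mutually independent {0,1}-valued random variables with E[I_i] = π_i ≥ π_min > 0. For each fold k, let (W_i^{(k)})_{i∈U_k} be square-integrable real random variables measurable with respect to the σ-algebra 𝒢_k generated by (I_j)_{j∈U∖U_k}. Define R_N = Σ_{k=1}^K Σ_{i∈U_k} (1 − I_i/π_i) W_i^{(k)}. Then E[ (R_N/N)² ] ≤ (K/(π_min N)) · E[ max_{1≤k≤K} (1/N_k) Σ_{i∈U_k} (W_i^{(k)})² ]. -/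

import Mathlib

open MeasureTheory ProbabilityTheory Finset

private lemma l2_mul_integrable {Ω : Type*} [mΩ : MeasurableSpace Ω] {P : Measure Ω}
    {f g : Ω → ℝ} (hf : MemLp f 2 P) (hg : MemLp g 2 P) :
    Integrable (fun ω => f ω * g ω) P := by
  have h : MemLp (g • f) 1 P := hf.smul hg
  have h2 := memLp_one_iff_integrable.mp h
  simpa [smul_eq_mul, mul_comm, Pi.mul_def] using h2

private lemma fold_core {Ω ι : Type*} [mΩ : MeasurableSpace Ω] [Fintype ι] [DecidableEq ι]
    (P : Measure Ω) [IsProbabilityMeasure P]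
    (I : ι → Ω → ℝ) (hImeas : ∀ i, Measurable (I i))
    (hI01 : ∀ i ω, I i ω = 0 ∨ I i ω = 1)
    (π : ι → ℝ) (πmin : ℝ) (hπmin : 0 < πmin) (hπlo : ∀ i, πmin ≤ π i)
    (hEI : ∀ i, ∫ ω, I i ω ∂P = π i)
    (hiIndep : iIndepFun I P)
    (T : Finset ι) (V : ι → Ω → ℝ)
    (hVmeas : ∀ i ∈ T, StronglyMeasurable[⨆ j ∈ Finset.univ \ T,
        MeasurableSpace.comap (I j) inferInstance] (V i))
    (hVL2 : ∀ i ∈ T, MemLp (V i) 2 P) :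
    ∫ ω, (∑ i ∈ T, (1 - I i ω / π i) * V i ω) ^ 2 ∂P
      ≤ πmin⁻¹ * ∑ i ∈ T, ∫ ω, (V i ω) ^ 2 ∂P := by
  classical
  have hπpos : ∀ i, 0 < π i := fun i => lt_of_lt_of_le hπmin (hπlo i)
  set m : ι → MeasurableSpace Ω := fun i => MeasurableSpace.comap (I i) inferInstance with hmdef
  have hm_le : ∀ i, m i ≤ mΩ := fun i => (hImeas i).comap_le
  set a : ι → Ω → ℝ := fun i ω => 1 - I i ω / π i with hadef
  have ham : ∀ i, Measurable[m i] (a i) := fun i =>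
    measurable_const.sub ((measurable_iff_comap_le.mpr le_rfl).div_const _)
  have hameas : ∀ i, Measurable (a i) := fun i => (ham i).mono (hm_le i) le_rfl
  have haL : ∀ i, MemLp (a i) ⊤ P := by
    intro i
    refine memLp_top_of_bound (hameas i).aestronglyMeasurable (1 + πmin⁻¹)
      (Filter.Eventually.of_forall fun ω => ?_)
    have h1 : (π i)⁻¹ ≤ πmin⁻¹ := inv_anti₀ hπmin (hπlo i)
    have h2 : (0:ℝ) ≤ (π i)⁻¹ := le_of_lt (inv_pos.mpr (hπpos i))
    rcases hI01 i ω with h | h <;>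
      · simp only [Real.norm_eq_abs, hadef, h, abs_le, one_div, zero_div, sub_zero]
        constructor <;> linarith [inv_nonneg.mpr hπmin.le, h1, h2]
  have haint : ∀ i, Integrable (a i) P := fun i => (haL i).integrable le_top
  have hIint : ∀ i, Integrable (I i) P := fun i =>
    (memLp_top_of_bound (hImeas i).aestronglyMeasurable 1
      (Filter.Eventually.of_forall fun ω => by
        rcases hI01 i ω with h | h <;> simp [h])).integrable le_top
  -- expectations of a
  have hEa : ∀ i, ∫ ω, a i ω ∂P = 0 := by
    intro i
    have : (fun ω => a i ω) = fun ω => 1 - I i ω / π i := by funext ω; rw [hadef]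
    rw [this, integral_sub (integrable_const 1) ((hIint i).div_const _), integral_div, hEI i]
    simp [div_self (hπpos i).ne']
  have hEaa_diag : ∀ i, ∫ ω, a i ω * a i ω ∂P = (π i)⁻¹ - 1 := by
    intro i
    have hcong : (fun ω => a i ω * a i ω)
        = fun ω => 1 - (2 / π i - ((π i) ^ 2)⁻¹) * I i ω := by
      funext ω
      have hπ := (hπpos i).ne'
      rcases hI01 i ω with h | h <;> simp only [hadef, h] <;> field_simp <;> ring
    rw [hcong, integral_sub (integrable_const 1) ((hIint i).const_mul _),
      integral_const_mul, hEI i]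
    have hπ := (hπpos i).ne'
    simp only [integral_const, probReal_univ, smul_eq_mul, one_mul]
    field_simp
    ring
  have hEaa_off : ∀ i j, i ≠ j → ∫ ω, a i ω * a j ω ∂P = 0 := by
    intro i j hij
    have hφ : ∀ l, Measurable (fun t : ℝ => 1 - t / π l) := fun l =>
      measurable_const.sub (measurable_id.div_const _)
    have hind : IndepFun (a i) (a j) P := (hiIndep.indepFun hij).comp (hφ i) (hφ j)
    have := hind.integral_mul_eq_mul_integral (haint i).aestronglyMeasurable (haint j).aestronglyMeasurable
    simpa [hEa i, hEa j] using this
  -- measurability of V on the training σ-algebra side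
  have hGle : (⨆ j ∈ Finset.univ \ T, MeasurableSpace.comap (I j) inferInstance) ≤ mΩ :=
    iSup₂_le fun j _ => (hImeas j).comap_le
  have hVm : ∀ i ∈ T, Measurable (V i) := fun i hi =>
    ((hVmeas i hi).measurable).mono hGle le_rfl
  -- independence of products
  have hIndepPair : ∀ i ∈ T, ∀ j ∈ T,
      IndepFun (fun ω => a i ω * a j ω) (fun ω => V i ω * V j ω) P := by
    intro i hi j hj
    have hST : Disjoint ({i, j} : Set ι) (((Finset.univ \ T : Finset ι) : Set ι)) := by
      rw [Set.disjoint_left]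
      rintro x hx hx2
      simp only [Finset.coe_sdiff, Finset.coe_univ, Set.mem_diff, Finset.mem_coe] at hx2
      rcases hx with rfl | rfl
      exacts [hx2.2 hi, hx2.2 hj]
    have hS : Indep (⨆ l ∈ ({i, j} : Set ι), m l)
        (⨆ l ∈ (((Finset.univ \ T : Finset ι) : Set ι)), m l) P :=
      indep_iSup_of_disjoint hm_le hiIndep.iIndep hST
    have hGeq : (⨆ l ∈ (((Finset.univ \ T : Finset ι) : Set ι)), m l)
        = (⨆ j ∈ Finset.univ \ T, MeasurableSpace.comap (I j) inferInstance) := by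
      rw [hmdef]
      simp only [Finset.mem_coe]
    rw [hGeq] at hS
    have hX : Measurable[⨆ l ∈ ({i, j} : Set ι), m l] (fun ω => a i ω * a j ω) :=
      Measurable.mul
        ((ham i).mono (le_iSup₂ (f := fun l (_ : l ∈ ({i, j} : Set ι)) => m l) i
          (by simp)) le_rfl)
        ((ham j).mono (le_iSup₂ (f := fun l (_ : l ∈ ({i, j} : Set ι)) => m l) j
          (by simp)) le_rfl)
    have hY : Measurable[⨆ j ∈ Finset.univ \ T,
        MeasurableSpace.comap (I j) inferInstance] (fun ω => V i ω * V j ω) :=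
      ((hVmeas i hi).measurable).mul ((hVmeas j hj).measurable)
    have h1 := indep_of_indep_of_le_left hS (measurable_iff_comap_le.mp hX)
    have h2 := indep_of_indep_of_le_right h1 (measurable_iff_comap_le.mp hY)
    exact h2
  -- L2 of a i * V i
  have haV2 : ∀ i ∈ T, MemLp (fun ω => a i ω * V i ω) 2 P := by
    intro i hi
    have := (hVL2 i hi).smul (r := 2) (haL i)
    simpa [smul_eq_mul, Pi.mul_def] using this
  have hprod_int : ∀ i ∈ T, ∀ j ∈ T,
      Integrable (fun ω => a i ω * V i ω * (a j ω * V j ω)) P := fun i hi j hj =>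
    l2_mul_integrable (haV2 i hi) (haV2 j hj)
  -- expand the square
  have hexp : ∫ ω, (∑ i ∈ T, a i ω * V i ω) ^ 2 ∂P
      = ∑ i ∈ T, ∑ j ∈ T, ∫ ω, a i ω * V i ω * (a j ω * V j ω) ∂P := by
    have h1 : ∀ ω, (∑ i ∈ T, a i ω * V i ω) ^ 2
        = ∑ i ∈ T, ∑ j ∈ T, a i ω * V i ω * (a j ω * V j ω) := fun ω => by
      rw [sq, Finset.sum_mul_sum]
    simp_rw [h1]
    rw [integral_finset_sum _ fun i hi =>
      integrable_finset_sum _ fun j hj => hprod_int i hi j hj]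
    exact Finset.sum_congr rfl fun i hi =>
      integral_finset_sum _ fun j hj => hprod_int i hi j hj
  have hterm : ∀ i ∈ T, ∀ j ∈ T,
      ∫ ω, a i ω * V i ω * (a j ω * V j ω) ∂P
        = (∫ ω, a i ω * a j ω ∂P) * ∫ ω, V i ω * V j ω ∂P := by
    intro i hi j hj
    have h1 : ∀ ω, a i ω * V i ω * (a j ω * V j ω)
        = a i ω * a j ω * (V i ω * V j ω) := fun ω => by ring
    simp_rw [h1]
    exact (hIndepPair i hi j hj).integral_mul_eq_mul_integral
      ((hameas i).mul (hameas j)).aestronglyMeasurable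
      ((hVm i hi).mul (hVm j hj)).aestronglyMeasurable
  have hdiagsum : ∀ i ∈ T,
      ∑ j ∈ T, ∫ ω, a i ω * V i ω * (a j ω * V j ω) ∂P
        = ((π i)⁻¹ - 1) * ∫ ω, (V i ω) ^ 2 ∂P := by
    intro i hi
    rw [Finset.sum_eq_single_of_mem i hi]
    · rw [hterm i hi i hi, hEaa_diag i]
      congr 1
      simp_rw [← sq]
    · intro j hj hji
      rw [hterm i hi j hj, hEaa_off i j (fun h => hji (h.symm)), zero_mul]
  have hVint_nonneg : ∀ i ∈ T, 0 ≤ ∫ ω, (V i ω) ^ 2 ∂P := fun i hi =>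
    integral_nonneg fun ω => sq_nonneg _
  have hfinal : ∫ ω, (∑ i ∈ T, a i ω * V i ω) ^ 2 ∂P
      ≤ πmin⁻¹ * ∑ i ∈ T, ∫ ω, (V i ω) ^ 2 ∂P := by
    rw [hexp, Finset.sum_congr rfl hdiagsum, Finset.mul_sum]
    refine Finset.sum_le_sum fun i hi => ?_
    refine mul_le_mul_of_nonneg_right ?_ (hVint_nonneg i hi)
    have h1 : (π i)⁻¹ ≤ πmin⁻¹ := inv_anti₀ hπmin (hπlo i)
    linarith
  have hgoal : (fun ω => (∑ i ∈ T, (1 - I i ω / π i) * V i ω) ^ 2)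
      = fun ω => (∑ i ∈ T, a i ω * V i ω) ^ 2 := by
    funext ω; rw [hadef]
  rw [hgoal]
  exact hfinal

/-- Mean-square control of the K-fold sample-split remainder under Poisson
sampling. -/
theorem poisson_kfold_remainder_bound {Ω ι : Type*} [mΩ : MeasurableSpace Ω]
    [Fintype ι] [DecidableEq ι]
    (P : Measure Ω) [IsProbabilityMeasure P]
    (hN : 1 ≤ Fintype.card ι)
    (K : ℕ) (hK : 0 < K)
    (fold : Fin K → Finset ι)
    (hne : ∀ k, (fold k).Nonempty)
    (hdisj : ∀ k l : Fin K, k ≠ l → Disjoint (fold k) (fold l))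
    (hcover : Finset.univ.biUnion fold = Finset.univ)
    (I : ι → Ω → ℝ) (hImeas : ∀ i, Measurable (I i))
    (hI01 : ∀ i ω, I i ω = 0 ∨ I i ω = 1)
    (π : ι → ℝ) (πmin : ℝ) (hπmin : 0 < πmin) (hπlo : ∀ i, πmin ≤ π i)
    (hEI : ∀ i, ∫ ω, I i ω ∂P = π i)
    (hiIndep : iIndepFun I P)
    (W : Fin K → ι → Ω → ℝ)
    (hWmeas : ∀ k, ∀ i ∈ fold k,
      StronglyMeasurable[⨆ j ∈ Finset.univ \ fold k,
        MeasurableSpace.comap (I j) inferInstance] (W k i))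
    (hWL2 : ∀ k, ∀ i ∈ fold k, MemLp (W k i) 2 P) :
    ∫ ω, ((∑ k, ∑ i ∈ fold k, (1 - I i ω / π i) * W k i ω)
            / (Fintype.card ι : ℝ)) ^ 2 ∂P
      ≤ ((K : ℝ) / (πmin * (Fintype.card ι : ℝ)))
          * ∫ ω, (⨆ k, ((fold k).card : ℝ)⁻¹
              * ∑ i ∈ fold k, (W k i ω) ^ 2) ∂P := by
  classical
  haveI : Nonempty (Fin K) := ⟨⟨0, hK⟩⟩
  have hNpos : (0:ℝ) < (Fintype.card ι : ℝ) := by exact_mod_cast hN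
  have hπpos : ∀ i, 0 < π i := fun i => lt_of_lt_of_le hπmin (hπlo i)
  -- per-fold bound from `fold_core`
  have hfold : ∀ k, ∫ ω, (∑ i ∈ fold k, (1 - I i ω / π i) * W k i ω) ^ 2 ∂P
      ≤ πmin⁻¹ * ∑ i ∈ fold k, ∫ ω, (W k i ω) ^ 2 ∂P := fun k =>
    fold_core P I hImeas hI01 π πmin hπmin hπlo hEI hiIndep (fold k) (W k)
      (hWmeas k) (hWL2 k)
  -- basic measurability/integrability
  have hGle : ∀ k, (⨆ j ∈ Finset.univ \ fold k,
      MeasurableSpace.comap (I j) inferInstance) ≤ mΩ :=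
    fun k => iSup₂_le fun j _ => (hImeas j).comap_le
  have hWm : ∀ k, ∀ i ∈ fold k, Measurable (W k i) := fun k i hi =>
    ((hWmeas k i hi).measurable).mono (hGle k) le_rfl
  have hW2int : ∀ k, ∀ i ∈ fold k, Integrable (fun ω => W k i ω ^ 2) P :=
    fun k i hi => (hWL2 k i hi).integrable_sq
  -- the per-fold L2 sums
  have hSL2 : ∀ k, MemLp (fun ω => ∑ i ∈ fold k, (1 - I i ω / π i) * W k i ω) 2 P := by
    intro k
    have haL : ∀ i, MemLp (fun ω => 1 - I i ω / π i) ⊤ P := by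
      intro i
      refine memLp_top_of_bound ((measurable_const.sub
        ((hImeas i).div_const _)).aestronglyMeasurable) (1 + πmin⁻¹)
        (Filter.Eventually.of_forall fun ω => ?_)
      have h1 : (π i)⁻¹ ≤ πmin⁻¹ := inv_anti₀ hπmin (hπlo i)
      have h2 : (0:ℝ) ≤ (π i)⁻¹ := le_of_lt (inv_pos.mpr (hπpos i))
      rcases hI01 i ω with h | h <;>
        · simp only [Real.norm_eq_abs, h, abs_le, one_div, zero_div, sub_zero]
          constructor <;> linarith [inv_nonneg.mpr hπmin.le, h1, h2]
    have h := memLp_finset_sum' (μ := P) (p := 2) (fold k)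
      (f := fun i ω => (1 - I i ω / π i) * W k i ω) (fun i hi => by
        have := (hWL2 k i hi).smul (r := 2) (haL i)
        simpa [smul_eq_mul, Pi.mul_def] using this)
    convert h using 1
    funext ω
    simp
  -- g functions and their sup
  have hgint : ∀ k, Integrable
      (fun ω => ((fold k).card : ℝ)⁻¹ * ∑ i ∈ fold k, W k i ω ^ 2) P :=
    fun k => (integrable_finset_sum _ (hW2int k)).const_mul _
  have hgmeas : ∀ k, Measurable
      (fun ω => ((fold k).card : ℝ)⁻¹ * ∑ i ∈ fold k, W k i ω ^ 2) :=
    fun k => measurable_const.mul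
      (Finset.measurable_sum _ fun i hi => ((hWm k i hi).pow_const 2))
  have hgnn : ∀ k ω, 0 ≤ ((fold k).card : ℝ)⁻¹ * ∑ i ∈ fold k, W k i ω ^ 2 :=
    fun k ω => mul_nonneg (inv_nonneg.mpr (Nat.cast_nonneg _))
      (Finset.sum_nonneg fun i _ => sq_nonneg _)
  have hgle : ∀ k ω, ((fold k).card : ℝ)⁻¹ * ∑ i ∈ fold k, W k i ω ^ 2
      ≤ ⨆ k', ((fold k').card : ℝ)⁻¹ * ∑ i ∈ fold k', W k' i ω ^ 2 := fun k ω =>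
    le_ciSup (f := fun k' => ((fold k').card : ℝ)⁻¹ * ∑ i ∈ fold k', W k' i ω ^ 2)
      (Set.Finite.bddAbove (Set.finite_range _)) k
  have hGint : Integrable
      (fun ω => ⨆ k, ((fold k).card : ℝ)⁻¹ * ∑ i ∈ fold k, W k i ω ^ 2) P := by
    refine Integrable.mono'
      (integrable_finset_sum Finset.univ fun k _ => hgint k)
      (Measurable.iSup hgmeas).aestronglyMeasurable
      (Filter.Eventually.of_forall fun ω => ?_)
    rw [Real.norm_eq_abs, abs_of_nonneg
      (le_trans (hgnn (Classical.arbitrary _) ω) (hgle _ ω))]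
    exact ciSup_le fun k => Finset.single_le_sum
      (f := fun k' => ((fold k').card : ℝ)⁻¹ * ∑ i ∈ fold k', W k' i ω ^ 2)
      (fun k' _ => hgnn k' ω) (Finset.mem_univ k)
  have hEg : ∀ k, ∫ ω, ((fold k).card : ℝ)⁻¹ * ∑ i ∈ fold k, W k i ω ^ 2 ∂P
      ≤ ∫ ω, ⨆ k', ((fold k').card : ℝ)⁻¹ * ∑ i ∈ fold k', W k' i ω ^ 2 ∂P :=
    fun k => integral_mono (hgint k) hGint (fun ω => hgle k ω)
  have hEgsum : ∀ k, ∑ i ∈ fold k, ∫ ω, W k i ω ^ 2 ∂P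
      = ((fold k).card : ℝ)
        * ∫ ω, ((fold k).card : ℝ)⁻¹ * ∑ i ∈ fold k, W k i ω ^ 2 ∂P := by
    intro k
    rw [integral_const_mul, ← integral_finset_sum _ (hW2int k)]
    have hc : ((fold k).card : ℝ) ≠ 0 := by
      exact_mod_cast (Finset.card_pos.mpr (hne k)).ne'
    field_simp
  have hcard : ∑ k : Fin K, ((fold k).card : ℝ) = (Fintype.card ι : ℝ) := by
    have h : ∑ k : Fin K, (fold k).card = Fintype.card ι := by
      rw [← Finset.card_biUnion (fun k _ l _ hkl => hdisj k l hkl), hcover,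
        Finset.card_univ]
    exact_mod_cast h
  -- pointwise Cauchy–Schwarz over folds
  have hptw : ∀ ω, (∑ k, ∑ i ∈ fold k, (1 - I i ω / π i) * W k i ω) ^ 2
      ≤ (K:ℝ) * ∑ k, (∑ i ∈ fold k, (1 - I i ω / π i) * W k i ω) ^ 2 := by
    intro ω
    have h := sq_sum_le_card_mul_sum_sq (s := (Finset.univ : Finset (Fin K)))
      (f := fun k => ∑ i ∈ fold k, (1 - I i ω / π i) * W k i ω)
    simpa [Finset.card_univ] using h
  -- main chain
  have hR2 : ∫ ω, (∑ k, ∑ i ∈ fold k, (1 - I i ω / π i) * W k i ω) ^ 2 ∂P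
      ≤ (K:ℝ) * ∑ k, ∫ ω, (∑ i ∈ fold k, (1 - I i ω / π i) * W k i ω) ^ 2 ∂P := by
    have hint : Integrable (fun ω => (K:ℝ)
        * ∑ k, (∑ i ∈ fold k, (1 - I i ω / π i) * W k i ω) ^ 2) P :=
      (integrable_finset_sum _ fun k _ => (hSL2 k).integrable_sq).const_mul _
    calc ∫ ω, (∑ k, ∑ i ∈ fold k, (1 - I i ω / π i) * W k i ω) ^ 2 ∂P
        ≤ ∫ ω, (K:ℝ) * ∑ k, (∑ i ∈ fold k, (1 - I i ω / π i) * W k i ω) ^ 2 ∂P :=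
          integral_mono_of_nonneg (Filter.Eventually.of_forall fun ω => sq_nonneg _)
            hint (Filter.Eventually.of_forall fun ω => hptw ω)
      _ = (K:ℝ) * ∑ k, ∫ ω, (∑ i ∈ fold k, (1 - I i ω / π i) * W k i ω) ^ 2 ∂P := by
          rw [integral_const_mul,
            integral_finset_sum _ fun k _ => (hSL2 k).integrable_sq]
  have hchain : ∑ k, ∫ ω, (∑ i ∈ fold k, (1 - I i ω / π i) * W k i ω) ^ 2 ∂P
      ≤ πmin⁻¹ * ((Fintype.card ι : ℝ)
        * ∫ ω, ⨆ k', ((fold k').card : ℝ)⁻¹ * ∑ i ∈ fold k', W k' i ω ^ 2 ∂P) := by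
    calc ∑ k, ∫ ω, (∑ i ∈ fold k, (1 - I i ω / π i) * W k i ω) ^ 2 ∂P
        ≤ ∑ k, πmin⁻¹ * ∑ i ∈ fold k, ∫ ω, (W k i ω) ^ 2 ∂P :=
          Finset.sum_le_sum fun k _ => hfold k
      _ = πmin⁻¹ * ∑ k, ∑ i ∈ fold k, ∫ ω, (W k i ω) ^ 2 ∂P := by
          rw [Finset.mul_sum]
      _ = πmin⁻¹ * ∑ k, ((fold k).card : ℝ)
            * ∫ ω, ((fold k).card : ℝ)⁻¹ * ∑ i ∈ fold k, W k i ω ^ 2 ∂P := by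
          rw [Finset.sum_congr rfl fun k _ => hEgsum k]
      _ ≤ πmin⁻¹ * ∑ k, ((fold k).card : ℝ)
            * ∫ ω, ⨆ k', ((fold k').card : ℝ)⁻¹ * ∑ i ∈ fold k', W k' i ω ^ 2 ∂P := by
          refine mul_le_mul_of_nonneg_left (Finset.sum_le_sum fun k _ => ?_)
            (inv_nonneg.mpr hπmin.le)
          exact mul_le_mul_of_nonneg_left (hEg k) (Nat.cast_nonneg _)
      _ = πmin⁻¹ * ((Fintype.card ι : ℝ)
            * ∫ ω, ⨆ k', ((fold k').card : ℝ)⁻¹ * ∑ i ∈ fold k', W k' i ω ^ 2 ∂P) := by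
          rw [← Finset.sum_mul, hcard]
  -- conclude
  have hLHS : ∫ ω, ((∑ k, ∑ i ∈ fold k, (1 - I i ω / π i) * W k i ω)
        / (Fintype.card ι : ℝ)) ^ 2 ∂P
      = (∫ ω, (∑ k, ∑ i ∈ fold k, (1 - I i ω / π i) * W k i ω) ^ 2 ∂P)
        / (Fintype.card ι : ℝ) ^ 2 := by
    simp_rw [div_pow]
    rw [integral_div]
  rw [hLHS]
  calc (∫ ω, (∑ k, ∑ i ∈ fold k, (1 - I i ω / π i) * W k i ω) ^ 2 ∂P)
        / (Fintype.card ι : ℝ) ^ 2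
      ≤ ((K:ℝ) * (πmin⁻¹ * ((Fintype.card ι : ℝ)
          * ∫ ω, ⨆ k', ((fold k').card : ℝ)⁻¹ * ∑ i ∈ fold k', W k' i ω ^ 2 ∂P)))
        / (Fintype.card ι : ℝ) ^ 2 := by
        gcongr
        exact hR2.trans (mul_le_mul_of_nonneg_left hchain (Nat.cast_nonneg _))
    _ = ((K : ℝ) / (πmin * (Fintype.card ι : ℝ)))
          * ∫ ω, (⨆ k, ((fold k).card : ℝ)⁻¹ * ∑ i ∈ fold k, (W k i ω) ^ 2) ∂P := by
        field_simp
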